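/- Let Ω = B_R(0) \ closure(B_{R-ε}(0)) ⊂ ℝⁿ, k = 2n(2/R+1)+3, ε ∈ (0, min{1,R/2}), Λ : (0,ε] → (0,∞) continuous non-increasing integrable with ∫₀^ε Λ < 1/k, and suppose the coefficients a_{ij}, b_i, c of a linear operator L[u] = Σ a_{ij} u_{x_i x_j} + Σ b_i u_{x_i} + c u satisfy: |y|² ≤ Σ a_{ij}(x) y_i y_j ≤ Λ(R−|x|)|y|² for all x ∈ Ω, y ∈ ℝⁿ; |b_i(x)| ≤ Λ(R−|x|); and −c(x) ≤ Λ(R−|x|)/(R−|x|). Define ṽ(x) = f(R−|x|) with f(r) = r + k∫₀^r∫₀^s Λ(t)dt ds. Then L[ṽ](x) ≥ Λ(R−|x|) > 0 for all x ∈ Ω. -/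

import Mathlib

open Set Metric MeasureTheory

section OneD

variable {Λ : ℝ → ℝ} {ε : ℝ}

/-- Primitive of Λ. -/
noncomputable def Gfun (Λ : ℝ → ℝ) : ℝ → ℝ := fun r => ∫ t in Set.Ioc (0:ℝ) r, Λ t

lemma Gfun_zero : Gfun Λ 0 = 0 := by simp [Gfun]

lemma Gfun_mono (hpos : ∀ d ∈ Set.Ioc (0:ℝ) ε, 0 < Λ d)
    (hint : IntegrableOn Λ (Set.Ioc 0 ε)) :
    MonotoneOn (Gfun Λ) (Set.Icc 0 ε) := by
  intro a ha b hb hab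
  apply setIntegral_mono_set (hint.mono_set (Ioc_subset_Ioc_right hb.2))
  · exact (ae_restrict_iff' measurableSet_Ioc).2 (Filter.Eventually.of_forall
      (fun t ht => (hpos t ⟨ht.1, ht.2.trans hb.2⟩).le))
  · exact (Ioc_subset_Ioc_right hab).eventuallyLE

lemma Gfun_nonneg (hpos : ∀ d ∈ Set.Ioc (0:ℝ) ε, 0 < Λ d)
    (hint : IntegrableOn Λ (Set.Ioc 0 ε)) {d : ℝ} (hd : d ∈ Set.Icc (0:ℝ) ε) :
    0 ≤ Gfun Λ d := by
  have := Gfun_mono hpos hint (left_mem_Icc.2 (hd.1.trans hd.2)) hd hd.1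
  rwa [Gfun_zero] at this

lemma Gfun_le (hpos : ∀ d ∈ Set.Ioc (0:ℝ) ε, 0 < Λ d)
    (hint : IntegrableOn Λ (Set.Ioc 0 ε)) {d : ℝ} (hd : d ∈ Set.Icc (0:ℝ) ε) :
    Gfun Λ d ≤ Gfun Λ ε :=
  Gfun_mono hpos hint hd (right_mem_Icc.2 (hd.1.trans hd.2)) hd.2

lemma Gfun_hasDerivAt (hcont : ContinuousOn Λ (Set.Ioc 0 ε))
    (hint : IntegrableOn Λ (Set.Ioc 0 ε)) {d : ℝ} (hd : d ∈ Set.Ioo (0:ℝ) ε) :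
    HasDerivAt (Gfun Λ) (Λ d) d := by
  have hii : IntervalIntegrable Λ volume 0 d := by
    rw [intervalIntegrable_iff, uIoc_of_le hd.1.le]
    exact hint.mono_set (Ioc_subset_Ioc_right hd.2.le)
  have hmeas : StronglyMeasurableAtFilter Λ (nhds d) volume :=
    (hcont.mono Ioo_subset_Ioc_self).stronglyMeasurableAtFilter isOpen_Ioo d hd
  have hca : ContinuousAt Λ d := hcont.continuousAt (Ioc_mem_nhds hd.1 hd.2)
  have h1 : HasDerivAt (fun u => ∫ t in (0:ℝ)..u, Λ t) (Λ d) d :=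
    intervalIntegral.integral_hasDerivAt_right hii hmeas hca
  apply h1.congr_of_eventuallyEq
  filter_upwards [eventually_gt_nhds hd.1] with u hu
  rw [Gfun, intervalIntegral.integral_of_le hu.le]

/-- Second primitive. -/
noncomputable def Hfun (Λ : ℝ → ℝ) : ℝ → ℝ := fun r => ∫ s in Set.Ioc (0:ℝ) r, Gfun Λ s

lemma Gfun_intervalIntegrable (hpos : ∀ d ∈ Set.Ioc (0:ℝ) ε, 0 < Λ d)
    (hint : IntegrableOn Λ (Set.Ioc 0 ε)) {d : ℝ} (hd : d ∈ Set.Icc (0:ℝ) ε) :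
    IntervalIntegrable (Gfun Λ) volume 0 d :=
  ((Gfun_mono hpos hint).mono
    (by rw [uIcc_of_le hd.1]; exact Icc_subset_Icc_right hd.2)).intervalIntegrable

lemma Hfun_hasDerivAt (hε : 0 < ε) (hcont : ContinuousOn Λ (Set.Ioc 0 ε))
    (hpos : ∀ d ∈ Set.Ioc (0:ℝ) ε, 0 < Λ d)
    (hint : IntegrableOn Λ (Set.Ioc 0 ε)) {d : ℝ} (hd : d ∈ Set.Ioo (0:ℝ) ε) :
    HasDerivAt (Hfun Λ) (Gfun Λ d) d := by
  have hii : IntervalIntegrable (Gfun Λ) volume 0 d :=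
    Gfun_intervalIntegrable hpos hint ⟨hd.1.le, hd.2.le⟩
  have hGcontOn : ContinuousOn (Gfun Λ) (Set.Ioo 0 ε) := fun u hu =>
    ((Gfun_hasDerivAt hcont hint hu).continuousAt).continuousWithinAt
  have hmeas : StronglyMeasurableAtFilter (Gfun Λ) (nhds d) volume :=
    hGcontOn.stronglyMeasurableAtFilter isOpen_Ioo d hd
  have hca : ContinuousAt (Gfun Λ) d := (Gfun_hasDerivAt hcont hint hd).continuousAt
  have h1 : HasDerivAt (fun u => ∫ t in (0:ℝ)..u, Gfun Λ t) (Gfun Λ d) d :=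
    intervalIntegral.integral_hasDerivAt_right hii hmeas hca
  apply h1.congr_of_eventuallyEq
  filter_upwards [eventually_gt_nhds hd.1] with u hu
  rw [Hfun, intervalIntegral.integral_of_le hu.le]

lemma Hfun_nonneg (hpos : ∀ d ∈ Set.Ioc (0:ℝ) ε, 0 < Λ d)
    (hint : IntegrableOn Λ (Set.Ioc 0 ε)) {d : ℝ} (hd : d ∈ Set.Icc (0:ℝ) ε) :
    0 ≤ Hfun Λ d :=
  setIntegral_nonneg measurableSet_Ioc fun s hs =>
    Gfun_nonneg hpos hint ⟨hs.1.le, hs.2.trans hd.2⟩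

lemma Hfun_le (hpos : ∀ d ∈ Set.Ioc (0:ℝ) ε, 0 < Λ d)
    (hint : IntegrableOn Λ (Set.Ioc 0 ε)) {d : ℝ} (hd : d ∈ Set.Icc (0:ℝ) ε) :
    Hfun Λ d ≤ d * Gfun Λ ε := by
  have h1 : Hfun Λ d ≤ ∫ _ in Set.Ioc (0:ℝ) d, Gfun Λ ε := by
    apply setIntegral_mono_on
    · rw [← intervalIntegrable_iff_integrableOn_Ioc_of_le hd.1]
      exact Gfun_intervalIntegrable hpos hint hd
    · exact integrableOn_const (by simp [Real.volume_Ioc])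
    · exact measurableSet_Ioc
    · intro s hs
      exact Gfun_mono hpos hint ⟨hs.1.le, hs.2.trans hd.2⟩
        (right_mem_Icc.2 (le_trans hd.1 hd.2)) (hs.2.trans hd.2)
  calc Hfun Λ d ≤ ∫ _ in Set.Ioc (0:ℝ) d, Gfun Λ ε := h1
    _ = d * Gfun Λ ε := by
        rw [setIntegral_const, Real.volume_real_Ioc_of_le hd.1, smul_eq_mul]
        ring_nf

end OneD

section Spatial
variable {n : ℕ}

local notation "E" => EuclideanSpace ℝ (Fin n)

lemma norm_hasFDerivAt {x : E} (hx : x ≠ 0) :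
    HasFDerivAt (fun y : E => ‖y‖) (‖x‖⁻¹ • innerSL ℝ x) x := by
  have hsq : HasFDerivAt (fun y : E => ‖y‖^2) (2 • (innerSL ℝ x)) x :=
    (hasStrictFDerivAt_norm_sq x).hasFDerivAt
  have hne : ‖x‖^2 ≠ 0 := pow_ne_zero 2 (norm_ne_zero_iff.2 hx)
  have h := hsq.sqrt hne
  have hxpos : (0:ℝ) < ‖x‖ := norm_pos_iff.2 hx
  have heq : (fun y : E => Real.sqrt (‖y‖^2)) = fun y : E => ‖y‖ := by
    funext y; exact Real.sqrt_sq (norm_nonneg y)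
  rw [heq] at h
  refine h.congr_fderiv ?_
  rw [Real.sqrt_sq (norm_nonneg x)]
  ext y
  simp only [ContinuousLinearMap.smul_apply, smul_eq_mul]
  ring

lemma abs_coord_le (x : E) (i : Fin n) : |x i| ≤ ‖x‖ := by
  have := abs_real_inner_le_norm x (EuclideanSpace.single i 1)
  simp only [EuclideanSpace.inner_single_right, EuclideanSpace.norm_single, norm_one, mul_one,
    one_mul, conj_trivial] at this
  exact this

end Spatial

/-- `pd i u` is the `i`-th partial derivative of `u`. -/
noncomputable def pd {n : ℕ} (i : Fin n) (u : EuclideanSpace ℝ (Fin n) → ℝ) :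
    EuclideanSpace ℝ (Fin n) → ℝ :=
  fun x => fderiv ℝ u x (EuclideanSpace.single i 1)

set_option maxHeartbeats 2000000 in
theorem stmt6 (n : ℕ) (hn : 1 ≤ n) (R ε : ℝ) (hR : 0 < R)
    (hε : 0 < ε) (hε' : ε < min 1 (R / 2))
    (k : ℝ) (hk : k = 2 * n * (2 / R + 1) + 3)
    (Λ : ℝ → ℝ)
    (hΛcont : ContinuousOn Λ (Set.Ioc 0 ε))
    (hΛmono : AntitoneOn Λ (Set.Ioc 0 ε))
    (hΛpos : ∀ d ∈ Set.Ioc (0 : ℝ) ε, 0 < Λ d)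
    (hΛint : IntegrableOn Λ (Set.Ioc 0 ε))
    (hΛsmall : (∫ s in Set.Ioc (0 : ℝ) ε, Λ s) < 1 / k)
    (Ω : Set (EuclideanSpace ℝ (Fin n)))
    (hΩ : Ω = Metric.ball (0 : EuclideanSpace ℝ (Fin n)) R \
      closure (Metric.ball (0 : EuclideanSpace ℝ (Fin n)) (R - ε)))
    (a : Fin n → Fin n → EuclideanSpace ℝ (Fin n) → ℝ)
    (b : Fin n → EuclideanSpace ℝ (Fin n) → ℝ)
    (c : EuclideanSpace ℝ (Fin n) → ℝ)
    (hell : ∀ x ∈ Ω, ∀ y : EuclideanSpace ℝ (Fin n),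
      ‖y‖ ^ 2 ≤ ∑ i, ∑ j, a i j x * y i * y j ∧
      ∑ i, ∑ j, a i j x * y i * y j ≤ Λ (R - ‖x‖) * ‖y‖ ^ 2)
    (hb : ∀ x ∈ Ω, ∀ i : Fin n, |b i x| ≤ Λ (R - ‖x‖))
    (hc : ∀ x ∈ Ω, -c x ≤ Λ (R - ‖x‖) / (R - ‖x‖))
    (f : ℝ → ℝ)
    (hf : ∀ r, f r = r + k * ∫ s in Set.Ioc (0 : ℝ) r, ∫ t in Set.Ioc (0 : ℝ) s, Λ t)
    (v : EuclideanSpace ℝ (Fin n) → ℝ)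
    (hv : ∀ x, v x = f (R - ‖x‖)) :
    ∀ x ∈ Ω,
      Λ (R - ‖x‖) ≤
        (∑ i, ∑ j, a i j x * pd i (pd j v) x) + (∑ i, b i x * pd i v x) + c x * v x ∧
      0 < Λ (R - ‖x‖) := by
  have hε1 : ε < 1 := lt_of_lt_of_le hε' (min_le_left _ _)
  have hεR : ε < R / 2 := lt_of_lt_of_le hε' (min_le_right _ _)
  have hn1 : (1:ℝ) ≤ (n:ℝ) := by exact_mod_cast hn
  have hkpos : 0 < k := by
    rw [hk]
    have h1 : (0:ℝ) < 2 / R + 1 := by positivity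
    nlinarith [mul_nonneg (by positivity : (0:ℝ) ≤ 2 * (n:ℝ)) h1.le]
  -- basic one-dimensional facts
  set G : ℝ → ℝ := Gfun Λ with hGdef
  set c1 : ℝ := G ε with hc1def
  have hc1small : c1 < 1 / k := hΛsmall
  have hc1nonneg : 0 ≤ c1 := Gfun_nonneg hΛpos hΛint ⟨le_refl 0 |>.trans hε.le, le_refl ε⟩
  set f1 : ℝ → ℝ := fun s => 1 + k * G s with hf1def
  have hf_eq : f = fun r => r + k * Hfun Λ r := by
    funext r; rw [hf r]; rfl
  have hfd : ∀ d ∈ Set.Ioo (0:ℝ) ε, HasDerivAt f (f1 d) d := by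
    intro d hd
    rw [hf_eq]
    have := (hasDerivAt_id d).add ((Hfun_hasDerivAt hε hΛcont hΛpos hΛint hd).const_mul k)
    exact this
  have hf1d : ∀ d ∈ Set.Ioo (0:ℝ) ε, HasDerivAt f1 (k * Λ d) d := by
    intro d hd
    exact ((Gfun_hasDerivAt hΛcont hΛint hd).const_mul k).const_add 1
  have hGb : ∀ d ∈ Set.Ioo (0:ℝ) ε, 0 ≤ G d ∧ G d ≤ c1 := fun d hd =>
    ⟨Gfun_nonneg hΛpos hΛint ⟨hd.1.le, hd.2.le⟩, Gfun_le hΛpos hΛint ⟨hd.1.le, hd.2.le⟩⟩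
  have hkc1 : k * c1 < 1 := by
    have := (mul_lt_mul_iff_right₀ hkpos).2 hc1small
    rwa [mul_one_div, div_self hkpos.ne'] at this
  have hf1b : ∀ d ∈ Set.Ioo (0:ℝ) ε, 1 ≤ f1 d ∧ f1 d ≤ 2 := by
    intro d hd
    obtain ⟨h0, h1⟩ := hGb d hd
    constructor
    · have : 0 ≤ k * G d := mul_nonneg hkpos.le h0
      simp only [hf1def]; linarith
    · have : k * G d ≤ k * c1 := (mul_le_mul_iff_right₀ hkpos).2 h1
      simp only [hf1def]; linarith
  -- the domain as an open set
  set U : Set (EuclideanSpace ℝ (Fin n)) :=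
    (fun x : EuclideanSpace ℝ (Fin n) => ‖x‖) ⁻¹' (Set.Ioo (R - ε) R) with hUdef
  have hUopen : IsOpen U := isOpen_Ioo.preimage continuous_norm
  have hΩU : Ω = U := by
    rw [hΩ, hUdef]
    have hRε : R - ε ≠ 0 := by linarith
    ext x
    simp [closure_ball (0 : EuclideanSpace ℝ (Fin n)) hRε, mem_ball_zero_iff,
      mem_closedBall_zero_iff, not_le, and_comm]
  have hv_eq : v = fun x : EuclideanSpace ℝ (Fin n) => f (R - ‖x‖) := funext hv
  -- first derivative of v everywhere on U
  have hvder : ∀ x ∈ U, HasFDerivAt v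
      ((-(f1 (R - ‖x‖)) * ‖x‖⁻¹) • innerSL ℝ x) x := by
    intro x hxU
    obtain ⟨hx1, hx2⟩ := hxU
    have hr0 : (0:ℝ) < ‖x‖ := by linarith [hεR, hR]
    have hx0 : x ≠ 0 := norm_pos_iff.1 hr0
    have hdIoo : R - ‖x‖ ∈ Set.Ioo (0:ℝ) ε := ⟨by linarith, by linarith⟩
    have hφ : HasFDerivAt (fun y : EuclideanSpace ℝ (Fin n) => R - ‖y‖)
        (-(‖x‖⁻¹ • innerSL ℝ x)) x := (norm_hasFDerivAt hx0).const_sub R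
    have hcomp := (hfd (R - ‖x‖) hdIoo).comp_hasFDerivAt x hφ
    rw [hv_eq]
    show HasFDerivAt (fun y : EuclideanSpace ℝ (Fin n) => f (R - ‖y‖)) _ x
    refine hcomp.congr_fderiv ?_
    ext y
    simp only [ContinuousLinearMap.smul_apply, ContinuousLinearMap.neg_apply, smul_eq_mul]
    ring
  have hpdv : ∀ (j : Fin n), ∀ x ∈ U, pd j v x = (-(f1 (R - ‖x‖)) * ‖x‖⁻¹) * x j := by
    intro j x hxU
    show fderiv ℝ v x (EuclideanSpace.single j 1) = _
    rw [(hvder x hxU).fderiv]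
    simp [ContinuousLinearMap.smul_apply, innerSL_apply_apply, EuclideanSpace.inner_single_right,
      conj_trivial]
  -- now fix the point
  intro x₀ hx₀
  have hx₀U : x₀ ∈ U := hΩU ▸ hx₀
  obtain ⟨hx1, hx2⟩ := hx₀U
  set r₀ : ℝ := ‖x₀‖ with hr₀def
  have hr0 : (0:ℝ) < r₀ := by linarith [hεR, hR]
  have hrhalf : R / 2 < r₀ := by linarith
  have hx0 : x₀ ≠ 0 := norm_pos_iff.1 hr0
  set d₀ : ℝ := R - r₀ with hd₀def
  have hd₀ : d₀ ∈ Set.Ioo (0:ℝ) ε := ⟨by simp only [hd₀def]; linarith, by simp only [hd₀def]; linarith⟩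
  set lam : ℝ := Λ d₀ with hlamdef
  have hlampos : 0 < lam := hΛpos d₀ ⟨hd₀.1, hd₀.2.le⟩
  set F1 : ℝ := f1 d₀ with hF1def
  obtain ⟨hF1ge, hF1le⟩ := hf1b d₀ hd₀
  have hF1ge' : (1:ℝ) ≤ F1 := hF1ge
  have hF1le' : F1 ≤ 2 := hF1le
  set P : ℝ := k * lam * r₀⁻¹ + F1 * (r₀ ^ 2)⁻¹ with hPdef
  set gv : ℝ := -F1 * r₀⁻¹ with hgvdef
  have hx₀U' : x₀ ∈ U := ⟨hx1, hx2⟩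
  -- second derivatives
  have hwder : ∀ j : Fin n, HasFDerivAt
      (fun x : EuclideanSpace ℝ (Fin n) => (-(f1 (R - ‖x‖)) * ‖x‖⁻¹) * x j)
      (((-(f1 d₀) * r₀⁻¹)) • (EuclideanSpace.proj j : EuclideanSpace ℝ (Fin n) →L[ℝ] ℝ)
        + (x₀ j) • (P • (r₀⁻¹ • innerSL ℝ x₀))) x₀ := by
    intro j
    have hg : HasDerivAt (fun s : ℝ => -(f1 (R - s)) * s⁻¹) P r₀ := by
      have hs : HasDerivAt (fun s : ℝ => R - s) (-1) r₀ := (hasDerivAt_id r₀).const_sub R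
      have h1 : HasDerivAt (fun s : ℝ => f1 (R - s)) (k * Λ d₀ * (-1)) r₀ :=
        by have := (hf1d d₀ hd₀).comp r₀ hs; exact this
      have h2 : HasDerivAt (fun s : ℝ => s⁻¹) (-(r₀ ^ 2)⁻¹) r₀ := hasDerivAt_inv hr0.ne'
      have h3 := h1.neg.mul h2
      refine h3.congr_deriv ?_
      simp only [hPdef, hlamdef, hF1def, Pi.neg_apply, ← hd₀def]
      ring
    have hgN := hg.comp_hasFDerivAt x₀ (norm_hasFDerivAt hx0)
    have hproj : HasFDerivAt (fun x : EuclideanSpace ℝ (Fin n) => x j)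
        (EuclideanSpace.proj j : EuclideanSpace ℝ (Fin n) →L[ℝ] ℝ) x₀ :=
      (EuclideanSpace.proj j : EuclideanSpace ℝ (Fin n) →L[ℝ] ℝ).hasFDerivAt
    have := hgN.mul hproj
    exact this
  have hpdd : ∀ i j : Fin n, pd i (pd j v) x₀ =
      (-F1 * r₀⁻¹) * (if j = i then 1 else 0) + (x₀ j) * (P * (r₀⁻¹ * x₀ i)) := by
    intro i j
    have heq : pd j v =ᶠ[nhds x₀]
        (fun x : EuclideanSpace ℝ (Fin n) => (-(f1 (R - ‖x‖)) * ‖x‖⁻¹) * x j) :=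
      Filter.eventually_of_mem (hUopen.mem_nhds hx₀U') (hpdv j)
    show fderiv ℝ (pd j v) x₀ (EuclideanSpace.single i 1) = _
    rw [heq.fderiv_eq, (hwder j).fderiv]
    simp only [ContinuousLinearMap.add_apply, ContinuousLinearMap.smul_apply,
      innerSL_apply_apply, EuclideanSpace.inner_single_right, conj_trivial, mul_one,
      PiLp.proj_apply, EuclideanSpace.single_apply, smul_eq_mul]
    simp only [hF1def]
    ring_nf
  -- expand the second-order sum
  have hterm : ∀ i j : Fin n, a i j x₀ * pd i (pd j v) x₀ =
      P * r₀⁻¹ * (a i j x₀ * x₀ i * x₀ j) + (if j = i then gv * a i j x₀ else 0) := by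
    intro i j
    rw [hpdd i j]
    split_ifs with h <;> simp only [hgvdef] <;> ring
  have hsum2 : ∑ i, ∑ j, a i j x₀ * pd i (pd j v) x₀ =
      P * r₀⁻¹ * (∑ i, ∑ j, a i j x₀ * x₀ i * x₀ j) + gv * (∑ i, a i i x₀) := by
    simp_rw [hterm, Finset.sum_add_distrib, Finset.sum_ite_eq', Finset.mem_univ, if_true,
      ← Finset.mul_sum]
  -- ellipticity bounds
  obtain ⟨hQ1, hQ2⟩ := hell x₀ hx₀ x₀
  rw [← hr₀def] at hQ1 hQ2
  rw [← hd₀def, ← hlamdef] at hQ2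
  have htr : ∀ m : Fin n, 1 ≤ a m m x₀ ∧ a m m x₀ ≤ lam := by
    intro m
    have h := hell x₀ hx₀ (EuclideanSpace.single m (1:ℝ))
    simp only [EuclideanSpace.single_apply, mul_ite, mul_one, mul_zero, ite_mul, zero_mul,
      Finset.sum_ite_eq', Finset.mem_univ, if_true, EuclideanSpace.norm_single, norm_one,
      one_pow] at h
    rw [← hr₀def, ← hd₀def, ← hlamdef] at h
    exact h
  have hTr1 : (n:ℝ) ≤ ∑ i, a i i x₀ := by
    calc (n:ℝ) = ∑ _i : Fin n, (1:ℝ) := by simp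
      _ ≤ ∑ i, a i i x₀ := Finset.sum_le_sum fun i _ => (htr i).1
  have hTr2 : ∑ i, a i i x₀ ≤ (n:ℝ) * lam := by
    calc ∑ i, a i i x₀ ≤ ∑ _i : Fin n, lam := Finset.sum_le_sum fun i _ => (htr i).2
      _ = (n:ℝ) * lam := by simp [mul_comm]
  -- first-order term
  have hpdvi : ∀ i : Fin n, pd i v x₀ = gv * x₀ i := by
    intro i
    rw [hpdv i x₀ hx₀U', ← hr₀def, ← hd₀def, ← hF1def, ← hgvdef]
  have hbb : ∀ i : Fin n, |b i x₀| ≤ lam := by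
    intro i
    have := hb x₀ hx₀ i
    rwa [← hr₀def, ← hd₀def, ← hlamdef] at this
  have hgvabs : |gv| = F1 * r₀⁻¹ := by
    rw [hgvdef, neg_mul, abs_neg, abs_mul, abs_of_pos (by linarith : (0:ℝ) < F1),
      abs_of_pos (inv_pos.2 hr0)]
  have habs : ∀ i : Fin n, |b i x₀ * (gv * x₀ i)| ≤ lam * 2 := by
    intro i
    have hxi : |x₀ i| ≤ r₀ := hr₀def ▸ abs_coord_le x₀ i
    calc |b i x₀ * (gv * x₀ i)| = |b i x₀| * (|gv| * |x₀ i|) := by rw [abs_mul, abs_mul]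
      _ ≤ lam * ((F1 * r₀⁻¹) * r₀) := by
          apply mul_le_mul (hbb i) _ (by positivity) hlampos.le
          rw [hgvabs]
          exact mul_le_mul_of_nonneg_left hxi (by positivity)
      _ = lam * F1 := by field_simp
      _ ≤ lam * 2 := mul_le_mul_of_nonneg_left hF1le' hlampos.le
  have hBi : ∀ i : Fin n, -(lam * 2) ≤ b i x₀ * pd i v x₀ := by
    intro i
    rw [hpdvi i]
    linarith [neg_abs_le (b i x₀ * (gv * x₀ i)), habs i]
  have hB : (n:ℝ) * -(lam * 2) ≤ ∑ i, b i x₀ * pd i v x₀ := by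
    have := Finset.card_nsmul_le_sum Finset.univ (fun i => b i x₀ * pd i v x₀) (-(lam * 2))
      (fun i _ => hBi i)
    simpa [Finset.card_univ, nsmul_eq_mul] using this
  -- zero-order term
  have hvx : v x₀ = f d₀ := by rw [hv x₀, hd₀def, hr₀def]
  have hfval : f d₀ = d₀ + k * Hfun Λ d₀ := by rw [hf_eq]
  have hH0 : 0 ≤ Hfun Λ d₀ := Hfun_nonneg hΛpos hΛint ⟨hd₀.1.le, hd₀.2.le⟩
  have hH1 : Hfun Λ d₀ ≤ d₀ * c1 := Hfun_le hΛpos hΛint ⟨hd₀.1.le, hd₀.2.le⟩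
  have hfd0pos : 0 < f d₀ := by
    have : 0 ≤ k * Hfun Λ d₀ := mul_nonneg hkpos.le hH0
    rw [hfval]; linarith [hd₀.1]
  have hfd0le : f d₀ ≤ 2 * d₀ := by
    have h1 : k * Hfun Λ d₀ ≤ k * (d₀ * c1) := mul_le_mul_of_nonneg_left hH1 hkpos.le
    have h2 : d₀ * (k * c1) ≤ d₀ * 1 := mul_le_mul_of_nonneg_left hkc1.le hd₀.1.le
    have h3 : k * (d₀ * c1) = d₀ * (k * c1) := by ring
    rw [hfval]; linarith
  have hC : -(2 * lam) ≤ c x₀ * v x₀ := by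
    rw [hvx]
    have hcx := hc x₀ hx₀
    rw [← hr₀def, ← hd₀def, ← hlamdef] at hcx
    have h1 : -(lam / d₀) ≤ c x₀ := by linarith
    have h2 : -(lam / d₀) * f d₀ ≤ c x₀ * f d₀ := mul_le_mul_of_nonneg_right h1 hfd0pos.le
    have hnp : -(lam / d₀) ≤ 0 := by
      have : 0 ≤ lam / d₀ := div_nonneg hlampos.le hd₀.1.le
      linarith
    have h3 : -(lam / d₀) * (2 * d₀) ≤ -(lam / d₀) * f d₀ :=
      mul_le_mul_of_nonpos_left hfd0le hnp
    have h4 : -(lam / d₀) * (2 * d₀) = -(2 * lam) := by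
      field_simp [hd₀.1.ne']
    linarith
  -- final combination
  refine ⟨?_, hlampos⟩
  rw [hsum2]
  have hP0 : 0 ≤ P := by
    rw [hPdef]
    have h1 : 0 ≤ k * lam * r₀⁻¹ := by positivity
    have h2 : 0 ≤ F1 * (r₀ ^ 2)⁻¹ := by positivity
    linarith
  have hPr0 : 0 ≤ P * r₀⁻¹ := mul_nonneg hP0 (inv_nonneg.2 hr0.le)
  have hstep1 : P * r₀⁻¹ * (r₀ ^ 2) ≤ P * r₀⁻¹ * (∑ i, ∑ j, a i j x₀ * x₀ i * x₀ j) :=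
    mul_le_mul_of_nonneg_left hQ1 hPr0
  have hstep1' : P * r₀⁻¹ * (r₀ ^ 2) = k * lam + F1 * r₀⁻¹ := by
    rw [hPdef]
    field_simp
  have hgv0 : gv ≤ 0 := by
    rw [hgvdef, neg_mul]
    exact neg_nonpos.2 (by positivity)
  have hstep2 : gv * ((n:ℝ) * lam) ≤ gv * (∑ i, a i i x₀) :=
    mul_le_mul_of_nonpos_left hTr2 hgv0
  have hrinv : r₀⁻¹ ≤ 2 / R := by
    have h := one_div_le_one_div_of_le (by positivity : (0:ℝ) < R / 2) hrhalf.le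
    rw [one_div, one_div, inv_div] at h
    exact h
  have hstep3 : -(2 * (2 / R)) * ((n:ℝ) * lam) ≤ gv * ((n:ℝ) * lam) := by
    apply mul_le_mul_of_nonneg_right _ (mul_nonneg (Nat.cast_nonneg n) hlampos.le)
    rw [hgvdef, neg_mul]
    have h : F1 * r₀⁻¹ ≤ 2 * (2 / R) :=
      mul_le_mul hF1le' hrinv (inv_nonneg.2 hr0.le) (by norm_num)
    linarith
  have hF1r : 0 ≤ F1 * r₀⁻¹ := by positivity
  have hkeq : k * lam = (2 * n * (2 / R + 1) + 3) * lam := by rw [hk]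
  linarith [hstep1, hstep1', hstep2, hstep3, hB, hC, hkeq, hF1r]
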